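/- arXiv:2006.03307 — 4 statements merged into one kernel-verified Lean document; each statement's English description precedes it below -/
import Mathlib

section
/- (Kantorovich, existence part, affine invariant form) Let f : D → ℝⁿ be differentiable on an open convex set D ⊆ ℝⁿ, let x⁰ ∈ D with f'(x⁰) invertible, let η ≥ ‖f'(x⁰)⁻¹ f(x⁰)‖, and let ω > 0 satisfy ‖f'(x⁰)⁻¹(f'(x) − f'(y))‖ ≤ ω‖x − y‖ for all x, y ∈ D. If h = ηω ≤ 1/2 and the closed ball B̄(x⁰, ρ₋) ⊆ D where ρ₋ = (1 − √(1 − 2h))/ω, then f has a zero x* in B̄(x⁰, ρ₋). -/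
open Set Metric Filter

/-- Majorant scalar sequence for the simplified Newton iteration. -/
noncomputable def kantSeq (η ω : ℝ) : ℕ → ℝ
  | 0 => 0
  | k + 1 => η + ω / 2 * (kantSeq η ω k) ^ 2

/-- Quadratic Taylor-type estimate under the affine-invariant Lipschitz condition. -/
lemma kant_taylor {n : ℕ} {D : Set (Fin n → ℝ)} (hDconv : Convex ℝ D)
    {f : (Fin n → ℝ) → (Fin n → ℝ)}
    {f' : (Fin n → ℝ) → ((Fin n → ℝ) →L[ℝ] (Fin n → ℝ))}
    (hdiff : ∀ x ∈ D, HasFDerivAt f (f' x) x)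
    (A : (Fin n → ℝ) →L[ℝ] (Fin n → ℝ)) {ω : ℝ}
    (hLip : ∀ x ∈ D, ∀ y ∈ D, ‖A ∘L (f' x - f' y)‖ ≤ ω * ‖x - y‖)
    {x y : Fin n → ℝ} (hx : x ∈ D) (hy : y ∈ D) :
    ‖A (f y) - A (f x) - A ((f' x) (y - x))‖ ≤ ω / 2 * ‖y - x‖ ^ 2 := by
  set v := y - x with hv
  set γ : ℝ → (Fin n → ℝ) := fun t => x + t • v with hγ
  have hmem : ∀ t ∈ Icc (0:ℝ) 1, γ t ∈ D := fun t ht => hDconv.add_smul_sub_mem hx hy ht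
  set c := A ((f' x) v) with hc
  set ψ : ℝ → (Fin n → ℝ) := fun t => A (f (γ t)) - A (f x) - t • c with hψ
  have hγd : ∀ t : ℝ, HasDerivAt γ v t := by
    intro t
    have := ((hasDerivAt_id t).smul_const v).const_add x
    rw [one_smul] at this
    exact this
  have hψd : ∀ t ∈ Icc (0:ℝ) 1, HasDerivAt ψ (A ((f' (γ t)) v) - c) t := by
    intro t ht
    have h1 : HasDerivAt (fun t => f (γ t)) ((f' (γ t)) v) t :=
      (hdiff (γ t) (hmem t ht)).comp_hasDerivAt t (hγd t)
    have h2 : HasDerivAt (fun t => A (f (γ t))) (A ((f' (γ t)) v)) t :=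
      A.hasFDerivAt.comp_hasDerivAt t h1
    have := (h2.sub_const (A (f x))).sub ((hasDerivAt_id t).smul_const c)
    rw [one_smul] at this
    exact this
  have hbound : ∀ t ∈ Ico (0:ℝ) 1, ‖A ((f' (γ t)) v) - c‖ ≤ ω * ‖v‖ ^ 2 * t := by
    intro t ht
    have hmemt := hmem t (Ico_subset_Icc_self ht)
    have h1 : A ((f' (γ t)) v) - c = (A ∘L (f' (γ t) - f' x)) v := by
      simp [hc]
    rw [h1]
    have h2 : ‖(A ∘L (f' (γ t) - f' x)) v‖ ≤ ‖A ∘L (f' (γ t) - f' x)‖ * ‖v‖ :=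
      (A ∘L (f' (γ t) - f' x)).le_opNorm v
    have h3 : ‖A ∘L (f' (γ t) - f' x)‖ ≤ ω * ‖γ t - x‖ := hLip _ hmemt x hx
    have h4 : ‖γ t - x‖ = t * ‖v‖ := by
      simp [hγ, norm_smul, abs_of_nonneg ht.1]
    calc ‖(A ∘L (f' (γ t) - f' x)) v‖ ≤ (ω * ‖γ t - x‖) * ‖v‖ :=
          h2.trans (mul_le_mul_of_nonneg_right h3 (norm_nonneg v))
      _ = ω * ‖v‖ ^ 2 * t := by rw [h4]; ring
  have hB : ∀ t : ℝ, HasDerivAt (fun t => ω * ‖v‖ ^ 2 / 2 * t ^ 2) (ω * ‖v‖ ^ 2 * t) t := by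
    intro t
    have := (hasDerivAt_pow 2 t).const_mul (ω * ‖v‖ ^ 2 / 2)
    refine this.congr_deriv ?_
    norm_num
    ring
  have key := image_norm_le_of_norm_deriv_right_le_deriv_boundary
    (f := ψ) (a := 0) (b := 1)
    (fun t ht => (hψd t ht).continuousAt.continuousWithinAt)
    (fun t ht => (hψd t (Ico_subset_Icc_self ht)).hasDerivWithinAt)
    (B := fun t => ω * ‖v‖ ^ 2 / 2 * t ^ 2)
    (by simp [hψ, hγ]) hB hbound (right_mem_Icc.2 zero_le_one)
  have hψ1 : ψ 1 = A (f y) - A (f x) - A ((f' x) (y - x)) := by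
    simp [hψ, hγ, hc, hv]
  rw [hψ1] at key
  calc ‖A (f y) - A (f x) - A ((f' x) (y - x))‖ ≤ ω * ‖v‖ ^ 2 / 2 * 1 ^ 2 := key
    _ = ω / 2 * ‖y - x‖ ^ 2 := by rw [hv]; ring

set_option maxHeartbeats 2000000 in
/-- Kantorovich's theorem, affine invariant form, existence part. -/
theorem kantorovich_existence
    (n : ℕ) (D : Set (Fin n → ℝ)) (hDopen : IsOpen D) (hDconv : Convex ℝ D)
    (f : (Fin n → ℝ) → (Fin n → ℝ))
    (f' : (Fin n → ℝ) → ((Fin n → ℝ) →L[ℝ] (Fin n → ℝ)))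
    (hdiff : ∀ x ∈ D, HasFDerivAt f (f' x) x)
    (x0 : Fin n → ℝ) (hx0 : x0 ∈ D)
    (A : (Fin n → ℝ) →L[ℝ] (Fin n → ℝ))
    (hA1 : A ∘L f' x0 = ContinuousLinearMap.id ℝ (Fin n → ℝ))
    (hA2 : f' x0 ∘L A = ContinuousLinearMap.id ℝ (Fin n → ℝ))
    (η ω h : ℝ) (hη : ‖A (f x0)‖ ≤ η) (hω : 0 < ω)
    (hLip : ∀ x ∈ D, ∀ y ∈ D, ‖A ∘L (f' x - f' y)‖ ≤ ω * ‖x - y‖)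
    (hh : h = η * ω) (hhalf : h ≤ 1 / 2)
    (ρ : ℝ) (hρ : ρ = (1 - Real.sqrt (1 - 2 * h)) / ω)
    (hball : Metric.closedBall x0 ρ ⊆ D) :
    ∃ xs ∈ Metric.closedBall x0 ρ, f xs = 0 := by
  classical
  have hη0 : 0 ≤ η := le_trans (norm_nonneg _) hη
  have hh0 : 0 ≤ h := by rw [hh]; positivity
  have h2h : 0 ≤ 1 - 2 * h := by linarith
  set s := Real.sqrt (1 - 2 * h) with hs
  have hs0 : 0 ≤ s := Real.sqrt_nonneg _
  have hs1 : s ≤ 1 := by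
    rw [hs]
    exact Real.sqrt_le_one.2 (by linarith)
  have hssq : s ^ 2 = 1 - 2 * h := Real.sq_sqrt h2h
  have hρ0 : 0 ≤ ρ := by
    rw [hρ]; apply div_nonneg <;> linarith
  have hfix : η + ω / 2 * ρ ^ 2 = ρ := by
    have hωne : ω ≠ 0 := ne_of_gt hω
    rw [hρ]
    field_simp
    nlinarith [hssq, hh]
  -- the simplified Newton map
  set g : (Fin n → ℝ) → (Fin n → ℝ) := fun x => x - A (f x) with hg
  set X : ℕ → (Fin n → ℝ) := fun k => g^[k] x0 with hX
  set t : ℕ → ℝ := kantSeq η ω with ht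
  have t0 : t 0 = 0 := rfl
  have tsucc : ∀ k, t (k + 1) = η + ω / 2 * (t k) ^ 2 := fun k => rfl
  have tnonneg : ∀ k, 0 ≤ t k := by
    intro k
    induction k with
    | zero => simp [t0]
    | succ k ih => rw [tsucc]; positivity
  have tmono : ∀ k, t k ≤ t (k + 1) := by
    intro k
    induction k with
    | zero => rw [t0, tsucc, t0]; nlinarith
    | succ k ih =>
      rw [tsucc, tsucc]
      have hsq : t k ^ 2 ≤ t (k + 1) ^ 2 := by nlinarith [tnonneg k]
      nlinarith [hω.le]
  have tle : ∀ k, t k ≤ ρ := by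
    intro k
    induction k with
    | zero => rw [t0]; exact hρ0
    | succ k ih =>
      rw [tsucc]
      have hsq : t k ^ 2 ≤ ρ ^ 2 := by nlinarith [tnonneg k]
      nlinarith [hω.le]
  -- contraction-type estimate for g
  have hgsub : ∀ x ∈ Metric.closedBall x0 ρ, ∀ y ∈ Metric.closedBall x0 ρ,
      ‖g x - g y‖ ≤ ω / 2 * ‖x - y‖ ^ 2 + ω * ‖y - x0‖ * ‖x - y‖ := by
    intro x hxB y hyB
    have hxD := hball hxB
    have hyD := hball hyB
    have key := kant_taylor hDconv hdiff A hLip hyD hxD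
    have hid : (A ∘L (f' x0 - f' y)) (x - y) = (x - y) - A ((f' y) (x - y)) := by
      have h1 : A ∘L (f' x0 - f' y) = ContinuousLinearMap.id ℝ (Fin n → ℝ) - A ∘L f' y := by
        rw [ContinuousLinearMap.comp_sub, hA1]
      rw [h1]
      simp
    have hdecomp : g x - g y =
        ((A ∘L (f' x0 - f' y)) (x - y)) - (A (f x) - A (f y) - A ((f' y) (x - y))) := by
      rw [hid]
      simp only [hg]
      abel
    rw [hdecomp]
    have h2 : ‖(A ∘L (f' x0 - f' y)) (x - y)‖ ≤ ω * ‖y - x0‖ * ‖x - y‖ := by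
      have hb : ‖A ∘L (f' x0 - f' y)‖ ≤ ω * ‖x0 - y‖ := hLip x0 hx0 y hyD
      calc ‖(A ∘L (f' x0 - f' y)) (x - y)‖ ≤ ‖A ∘L (f' x0 - f' y)‖ * ‖x - y‖ :=
            (A ∘L (f' x0 - f' y)).le_opNorm _
        _ ≤ (ω * ‖x0 - y‖) * ‖x - y‖ := mul_le_mul_of_nonneg_right hb (norm_nonneg _)
        _ = ω * ‖y - x0‖ * ‖x - y‖ := by rw [norm_sub_rev]
    calc ‖(A ∘L (f' x0 - f' y)) (x - y) - (A (f x) - A (f y) - A ((f' y) (x - y)))‖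
        ≤ ‖(A ∘L (f' x0 - f' y)) (x - y)‖ + ‖A (f x) - A (f y) - A ((f' y) (x - y))‖ :=
          norm_sub_le _ _
      _ ≤ ω * ‖y - x0‖ * ‖x - y‖ + ω / 2 * ‖x - y‖ ^ 2 := add_le_add h2 key
      _ = ω / 2 * ‖x - y‖ ^ 2 + ω * ‖y - x0‖ * ‖x - y‖ := by ring
  -- main induction
  have hXsucc : ∀ k, X (k + 1) = g (X k) := by
    intro k
    simp [hX, Function.iterate_succ_apply']
  have main : ∀ k, ‖X (k + 1) - X k‖ ≤ t (k + 1) - t k ∧ ‖X k - x0‖ ≤ t k := by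
    intro k
    induction k with
    | zero =>
      constructor
      · have hX1 : X 1 = g x0 := by simp [hX]
        have hX0 : X 0 = x0 := by simp [hX]
        rw [hX1, hX0, tsucc, t0]
        have hgx : g x0 - x0 = -(A (f x0)) := by simp [hg]
        rw [hgx, norm_neg]
        simpa using hη
      · simp [hX, t0]
    | succ k ih =>
      obtain ⟨ihd, ihr⟩ := ih
      have hΔ : 0 ≤ t (k + 1) - t k := by linarith [tmono k]
      have hrk1 : ‖X (k + 1) - x0‖ ≤ t (k + 1) := by
        calc ‖X (k + 1) - x0‖ = ‖(X (k + 1) - X k) + (X k - x0)‖ := by rw [sub_add_sub_cancel]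
          _ ≤ ‖X (k + 1) - X k‖ + ‖X k - x0‖ := norm_add_le _ _
          _ ≤ (t (k + 1) - t k) + t k := add_le_add ihd ihr
          _ = t (k + 1) := by ring
      refine ⟨?_, hrk1⟩
      have hx1 : X (k + 1) ∈ Metric.closedBall x0 ρ :=
        mem_closedBall_iff_norm.2 (hrk1.trans (tle _))
      have hx2 : X k ∈ Metric.closedBall x0 ρ :=
        mem_closedBall_iff_norm.2 (ihr.trans (tle _))
      have hd0 : 0 ≤ ‖X (k + 1) - X k‖ := norm_nonneg _
      have hr0 : 0 ≤ ‖X k - x0‖ := norm_nonneg _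
      have est := hgsub _ hx1 _ hx2
      rw [← hXsucc (k + 1), ← hXsucc k] at est
      have p1 : ‖X (k + 1) - X k‖ * ‖X (k + 1) - X k‖ ≤ (t (k + 1) - t k) * (t (k + 1) - t k) :=
        mul_le_mul ihd ihd hd0 hΔ
      have p2 : ‖X k - x0‖ * ‖X (k + 1) - X k‖ ≤ t k * (t (k + 1) - t k) :=
        mul_le_mul ihr ihd hd0 (tnonneg k)
      have e1 : t (k + 2) = η + ω / 2 * (t (k + 1)) ^ 2 := tsucc (k + 1)
      have e2 : t (k + 1) = η + ω / 2 * (t k) ^ 2 := tsucc k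
      have q1 := mul_le_mul_of_nonneg_left p1 (by positivity : (0:ℝ) ≤ ω / 2)
      have q2 := mul_le_mul_of_nonneg_left p2 hω.le
      have efinal : ω / 2 * ((t (k + 1) - t k) * (t (k + 1) - t k))
          + ω * (t k * (t (k + 1) - t k)) = t (k + 2) - t (k + 1) := by
        rw [e1]
        linear_combination e2
      calc ‖X (k + 1 + 1) - X (k + 1)‖
          ≤ ω / 2 * ‖X (k + 1) - X k‖ ^ 2 + ω * ‖X k - x0‖ * ‖X (k + 1) - X k‖ := est
        _ = ω / 2 * (‖X (k + 1) - X k‖ * ‖X (k + 1) - X k‖)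
            + ω * (‖X k - x0‖ * ‖X (k + 1) - X k‖) := by ring
        _ ≤ ω / 2 * ((t (k + 1) - t k) * (t (k + 1) - t k))
            + ω * (t k * (t (k + 1) - t k)) := add_le_add q1 q2
        _ = t (k + 2) - t (k + 1) := efinal
  have hXmemball : ∀ k, X k ∈ Metric.closedBall x0 ρ := fun k =>
    mem_closedBall_iff_norm.2 ((main k).2.trans (tle k))
  -- telescoping estimate
  have htel : ∀ k m, k ≤ m → ‖X m - X k‖ ≤ t m - t k := by
    intro k m hkm
    induction m, hkm using Nat.le_induction with
    | base => simp
    | succ m hkm ih =>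
      calc ‖X (m + 1) - X k‖ = ‖(X (m + 1) - X m) + (X m - X k)‖ := by rw [sub_add_sub_cancel]
        _ ≤ ‖X (m + 1) - X m‖ + ‖X m - X k‖ := norm_add_le _ _
        _ ≤ (t (m + 1) - t m) + (t m - t k) := add_le_add (main m).1 ih
        _ = t (m + 1) - t k := by ring
  -- convergence
  have hmonot : Monotone t := monotone_nat_of_le_succ tmono
  have hbdd : BddAbove (Set.range t) := ⟨ρ, by rintro _ ⟨k, rfl⟩; exact tle k⟩
  set L := ⨆ k, t k with hL
  have htend : Tendsto t atTop (nhds L) := tendsto_atTop_ciSup hmonot hbdd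
  have htkL : ∀ k, t k ≤ L := fun k => le_ciSup hbdd k
  have hcauchy : CauchySeq X := by
    apply cauchySeq_of_le_tendsto_0 (fun N => L - t N)
    · intro a b N ha hb
      rcases le_total a b with hab | hab
      · calc dist (X a) (X b) = ‖X b - X a‖ := by rw [dist_eq_norm, norm_sub_rev]
          _ ≤ t b - t a := htel a b hab
          _ ≤ L - t N := by linarith [htkL b, hmonot ha]
      · calc dist (X a) (X b) = ‖X a - X b‖ := dist_eq_norm _ _
          _ ≤ t a - t b := htel b a hab
          _ ≤ L - t N := by linarith [htkL a, hmonot hb]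
    · have : Tendsto (fun N => L - t N) atTop (nhds (L - L)) :=
        tendsto_const_nhds.sub htend
      simpa using this
  obtain ⟨xs, hxs⟩ := cauchySeq_tendsto_of_complete hcauchy
  have hxsball : xs ∈ Metric.closedBall x0 ρ :=
    IsClosed.mem_of_tendsto Metric.isClosed_closedBall hxs (Filter.Eventually.of_forall hXmemball)
  refine ⟨xs, hxsball, ?_⟩
  have hfcont : ContinuousAt f xs := (hdiff xs (hball hxsball)).continuousAt
  have hgcont : ContinuousAt g xs := by
    exact continuousAt_id.sub (A.continuous.continuousAt.comp hfcont)
  have h1 : Tendsto (fun k => X (k + 1)) atTop (nhds xs) :=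
    hxs.comp (tendsto_add_atTop_nat 1)
  have h2 : Tendsto (fun k => g (X k)) atTop (nhds (g xs)) := hgcont.tendsto.comp hxs
  have h3 : (fun k => X (k + 1)) = fun k => g (X k) := funext hXsucc
  have hfp : g xs = xs := tendsto_nhds_unique h2 (h3 ▸ h1)
  have hAf : A (f xs) = 0 := by
    have : xs - A (f xs) = xs := hfp
    have := sub_eq_self.mp this
    exact this
  have h4 := congrArg (fun T : (Fin n → ℝ) →L[ℝ] (Fin n → ℝ) => T (f xs)) hA2
  simp only [ContinuousLinearMap.comp_apply, ContinuousLinearMap.id_apply] at h4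
  rw [hAf] at h4
  simpa using h4.symm
end

section
/- (Kantorovich, uniqueness part) Under the hypotheses of Kantorovich's theorem (f : D → ℝⁿ differentiable on open convex D, f'(x⁰) invertible, ‖f'(x⁰)⁻¹ f(x⁰)‖ ≤ η, Lipschitz constant ω for f'(x⁰)⁻¹ f' on D, h = ηω ≤ 1/2, B̄(x⁰, ρ₋) ⊆ D), the zero x* of f in B̄(x⁰, ρ₋) is the unique zero of f in (B̄(x⁰, ρ₋) ∪ B(x⁰, ρ₊)) ∩ D, where ρ₊ = (1 + √(1 − 2h))/ω. -/
open Set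

lemma kant_mv_quad {E F : Type*} [NormedAddCommGroup E] [NormedSpace ℝ E]
    [NormedAddCommGroup F] [NormedSpace ℝ F]
    {g : E → F} {g' : E → (E →L[ℝ] F)} {s : Set E} (hs : Convex ℝ s)
    (hg : ∀ z ∈ s, HasFDerivAt g (g' z) z)
    {ω : ℝ} (hω : 0 ≤ ω) {x0 : E}
    (hbound : ∀ z ∈ s, ‖g' z‖ ≤ ω * ‖z - x0‖)
    {x y : E} (hx : x ∈ s) (hy : y ∈ s) :
    ‖g x - g y‖ ≤ ω / 2 * (‖x - x0‖ + ‖y - x0‖) * ‖x - y‖ := by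
  set a : ℝ := ‖y - x0‖ with ha
  set b : ℝ := ‖x - x0‖ with hb
  set c : ℝ := ‖x - y‖ with hc
  set z : ℝ → E := fun t => y + t • (x - y) with hz
  have hzmem : ∀ t ∈ Icc (0:ℝ) 1, z t ∈ s := by
    intro t ht
    have := hs hy hx (by linarith [ht.2] : (0:ℝ) ≤ 1 - t) ht.1 (by ring)
    convert this using 1
    simp [hz, smul_sub, sub_smul]
    abel
  set φ : ℝ → F := fun t => g (z t) - g y with hφ
  have hzderiv : ∀ t : ℝ, HasDerivAt z (x - y) t := by
    intro t
    rw [hz]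
    simpa using ((hasDerivAt_id t).smul_const (x - y)).const_add y
  have hφderiv : ∀ t ∈ Icc (0:ℝ) 1, HasDerivAt φ (g' (z t) (x - y)) t := by
    intro t ht
    exact (((hg (z t) (hzmem t ht)).comp_hasDerivAt t (hzderiv t)).sub_const (g y))
  set B : ℝ → ℝ := fun t => ω * c * (a * t + (b - a) * (t ^ 2 / 2)) with hB
  have hBderiv : ∀ t : ℝ, HasDerivAt B (ω * c * (a + (b - a) * t)) t := by
    intro t
    have h1 : HasDerivAt (fun t : ℝ => a * t + (b - a) * (t ^ 2 / 2)) (a + (b - a) * t) t := by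
      have h2 := (hasDerivAt_pow 2 t).div_const 2
      have h3 := ((hasDerivAt_id t).const_mul a).add (h2.const_mul (b - a))
      exact h3.congr_deriv (by norm_num)
    simpa using h1.const_mul (ω * c)
  have hbd : ∀ t ∈ Ico (0:ℝ) 1, ‖g' (z t) (x - y)‖ ≤ ω * c * (a + (b - a) * t) := by
    intro t ht
    have ht' : t ∈ Icc (0:ℝ) 1 := ⟨ht.1, le_of_lt ht.2⟩
    have h1 : ‖g' (z t) (x - y)‖ ≤ ‖g' (z t)‖ * c := (g' (z t)).le_opNorm _
    have h2 : ‖g' (z t)‖ ≤ ω * ‖z t - x0‖ := hbound _ (hzmem t ht')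
    have h3 : ‖z t - x0‖ ≤ (1 - t) * a + t * b := by
      have : z t - x0 = (1 - t) • (y - x0) + t • (x - x0) := by
        simp [hz, smul_sub, sub_smul]; abel
      rw [this]
      calc ‖(1 - t) • (y - x0) + t • (x - x0)‖
          ≤ ‖(1 - t) • (y - x0)‖ + ‖t • (x - x0)‖ := norm_add_le _ _
        _ = (1 - t) * a + t * b := by
            rw [norm_smul, norm_smul, Real.norm_eq_abs, Real.norm_eq_abs,
              abs_of_nonneg (by linarith [ht.2] : (0:ℝ) ≤ 1 - t), abs_of_nonneg ht.1]
    have hc0 : (0:ℝ) ≤ c := norm_nonneg _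
    nlinarith [norm_nonneg (g' (z t)), mul_le_mul_of_nonneg_right h2 hc0,
      mul_le_mul_of_nonneg_right (mul_le_mul_of_nonneg_left h3 hω) hc0]
  have hφcont : ContinuousOn φ (Icc 0 1) :=
    fun t ht => ((hφderiv t ht).continuousAt).continuousWithinAt
  have key := image_norm_le_of_norm_deriv_right_le_deriv_boundary hφcont
    (fun t ht => (hφderiv t (Ico_subset_Icc_self ht)).hasDerivWithinAt)
    (by simp [hφ, hB, hz] : ‖φ 0‖ ≤ B 0) hBderiv hbd
  have h1 := key (right_mem_Icc.2 zero_le_one)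
  have hz1 : z 1 = x := by simp [hz]
  have : ‖g x - g y‖ ≤ B 1 := by rw [← hz1]; exact h1
  calc ‖g x - g y‖ ≤ B 1 := this
    _ = ω / 2 * (b + a) * c := by simp [hB]; ring


private noncomputable def kantT (η ω : ℝ) : ℕ → ℝ
  | 0 => 0
  | (k+1) => η + ω / 2 * (kantT η ω k) ^ 2

private def kantX {α : Type*} (g : α → α) (x0 : α) : ℕ → α
  | 0 => x0
  | (k+1) => g (kantX g x0 k)

set_option maxHeartbeats 1000000 in
/-- Kantorovich's theorem, affine invariant form, uniqueness part: the zero in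
`B̄(x⁰,ρ₋)` is the unique zero of `f` in `(B̄(x⁰,ρ₋) ∪ B(x⁰,ρ₊)) ∩ D`. -/
theorem kantorovich_uniqueness
    (n : ℕ) (D : Set (Fin n → ℝ)) (hDopen : IsOpen D) (hDconv : Convex ℝ D)
    (f : (Fin n → ℝ) → (Fin n → ℝ))
    (f' : (Fin n → ℝ) → ((Fin n → ℝ) →L[ℝ] (Fin n → ℝ)))
    (hdiff : ∀ x ∈ D, HasFDerivAt f (f' x) x)
    (x0 : Fin n → ℝ) (hx0 : x0 ∈ D)
    (A : (Fin n → ℝ) →L[ℝ] (Fin n → ℝ))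
    (hA1 : A ∘L f' x0 = ContinuousLinearMap.id ℝ (Fin n → ℝ))
    (hA2 : f' x0 ∘L A = ContinuousLinearMap.id ℝ (Fin n → ℝ))
    (η ω h : ℝ) (hη : ‖A (f x0)‖ ≤ η) (hω : 0 < ω)
    (hLip : ∀ x ∈ D, ∀ y ∈ D, ‖A ∘L (f' x - f' y)‖ ≤ ω * ‖x - y‖)
    (hh : h = η * ω) (hhalf : h ≤ 1 / 2)
    (ρm ρp : ℝ) (hρm : ρm = (1 - Real.sqrt (1 - 2 * h)) / ω)
    (hρp : ρp = (1 + Real.sqrt (1 - 2 * h)) / ω)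
    (hball : Metric.closedBall x0 ρm ⊆ D) :
    ∃ xs ∈ Metric.closedBall x0 ρm, f xs = 0 ∧
      ∀ y ∈ (Metric.closedBall x0 ρm ∪ Metric.ball x0 ρp) ∩ D, f y = 0 → y = xs := by
  -- numeric preliminaries
  have hη0 : 0 ≤ η := le_trans (norm_nonneg _) hη
  have hh0 : 0 ≤ h := by rw [hh]; positivity
  have hs0 : (0:ℝ) ≤ 1 - 2 * h := by linarith
  set s : ℝ := Real.sqrt (1 - 2 * h) with hsdef
  have hsnn : 0 ≤ s := Real.sqrt_nonneg _
  have hs1 : s ≤ 1 := by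
    rw [hsdef]
    have : (1:ℝ) - 2 * h ≤ 1 := by linarith
    calc Real.sqrt (1 - 2*h) ≤ Real.sqrt 1 := Real.sqrt_le_sqrt this
      _ = 1 := Real.sqrt_one
  have hssq : s ^ 2 = 1 - 2 * h := Real.sq_sqrt hs0
  have hρm0 : 0 ≤ ρm := by rw [hρm]; exact div_nonneg (by linarith) hω.le
  have hρmp : ρm ≤ ρp := by
    rw [hρm, hρp]
    rw [div_le_div_iff₀ hω hω]
    nlinarith
  have idm : η + ω / 2 * ρm ^ 2 = ρm := by
    rw [hρm]; field_simp; nlinarith [hssq]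
  have idp : η + ω / 2 * ρp ^ 2 = ρp := by
    rw [hρp]; field_simp; nlinarith [hssq]
  have idsum : ω / 2 * (ρp + ρm) = 1 := by
    rw [hρm, hρp]; field_simp; ring
  have idprod : ω / 2 * (ρm * ρp) = η := by
    rw [hρm, hρp]; rw [hh] at hssq; field_simp; nlinarith [hssq]
  -- the simplified Newton map
  set g : (Fin n → ℝ) → (Fin n → ℝ) := fun x => x - A (f x) with hg
  set g' : (Fin n → ℝ) → ((Fin n → ℝ) →L[ℝ] (Fin n → ℝ)) :=
    fun z => A ∘L (f' x0 - f' z) with hg'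
  have hgderiv : ∀ z ∈ D, HasFDerivAt g (g' z) z := by
    intro z hz
    have h1 : HasFDerivAt (fun x => A (f x)) (A ∘L f' z) z :=
      A.hasFDerivAt.comp z (hdiff z hz)
    have h2 : g' z = ContinuousLinearMap.id ℝ (Fin n → ℝ) - A ∘L f' z := by
      rw [hg']
      simp only [ContinuousLinearMap.comp_sub, hA1]
    rw [h2]
    exact (hasFDerivAt_id z).sub h1
  have hgbound : ∀ z ∈ D, ‖g' z‖ ≤ ω * ‖z - x0‖ := by
    intro z hz
    calc ‖g' z‖ ≤ ω * ‖x0 - z‖ := hLip x0 hx0 z hz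
      _ = ω * ‖z - x0‖ := by rw [norm_sub_rev]
  have key : ∀ x ∈ D, ∀ y ∈ D,
      ‖g x - g y‖ ≤ ω / 2 * (‖x - x0‖ + ‖y - x0‖) * ‖x - y‖ :=
    fun x hx y hy => kant_mv_quad hDconv hgderiv (le_of_lt hω) hgbound hx hy
  -- majorant sequence
  obtain ⟨T, T0, Tsucc⟩ : ∃ T : ℕ → ℝ, T 0 = 0 ∧ ∀ k, T (k + 1) = η + ω / 2 * T k ^ 2 :=
    ⟨kantT η ω, rfl, fun k => rfl⟩
  have Tnn_le : ∀ k, 0 ≤ T k ∧ T k ≤ ρm := by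
    intro k
    induction k with
    | zero => rw [T0]; exact ⟨le_refl _, hρm0⟩
    | succ k ih =>
      rw [Tsucc]
      constructor
      · positivity
      · nlinarith [ih.1, ih.2, idm, mul_le_mul ih.2 ih.2 ih.1 hρm0, hω.le]
  have Tmono : Monotone T := by
    apply monotone_nat_of_le_succ
    intro k
    have h1 := (Tnn_le k).1
    have h2 := (Tnn_le k).2
    rw [Tsucc]
    have hexp : η + ω / 2 * T k ^ 2 - T k = ω / 2 * ((ρm - T k) * (ρp - T k)) := by
      linear_combination T k * idsum - idprod
    nlinarith [mul_nonneg (sub_nonneg.2 h2) (sub_nonneg.2 (h2.trans hρmp)), hω.le]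
  -- the Newton iterates
  obtain ⟨X, X0, Xsucc⟩ : ∃ X : ℕ → (Fin n → ℝ), X 0 = x0 ∧ ∀ k, X (k + 1) = g (X k) :=
    ⟨kantX g x0, rfl, fun k => rfl⟩
  have main : ∀ k, ‖X k - x0‖ ≤ T k ∧ ‖X (k+1) - X k‖ ≤ T (k+1) - T k := by
    intro k
    induction k with
    | zero =>
      constructor
      · simp [X0, T0]
      · have : X 1 - X 0 = -(A (f x0)) := by
          rw [Xsucc, X0, hg]; simp
        rw [this, norm_neg, Tsucc, T0]
        simpa using hη
    | succ k ih =>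
      have hXk : ‖X k - x0‖ ≤ T k := ih.1
      have hXk1 : ‖X (k+1) - x0‖ ≤ T (k+1) := by
        calc ‖X (k+1) - x0‖ = ‖(X (k+1) - X k) + (X k - x0)‖ := by abel_nf
          _ ≤ ‖X (k+1) - X k‖ + ‖X k - x0‖ := norm_add_le _ _
          _ ≤ (T (k+1) - T k) + T k := add_le_add ih.2 ih.1
          _ = T (k+1) := by ring
      refine ⟨hXk1, ?_⟩
      have hmemk : X k ∈ D := hball (by
        simp only [Metric.mem_closedBall, dist_eq_norm]
        exact le_trans hXk (Tnn_le k).2)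
      have hmemk1 : X (k+1) ∈ D := hball (by
        simp only [Metric.mem_closedBall, dist_eq_norm]
        exact le_trans hXk1 (Tnn_le (k+1)).2)
      have hk := key (X (k+1)) hmemk1 (X k) hmemk
      rw [← Xsucc, ← Xsucc] at hk
      calc ‖X (k+1+1) - X (k+1)‖
          ≤ ω / 2 * (‖X (k+1) - x0‖ + ‖X k - x0‖) * ‖X (k+1) - X k‖ := hk
        _ ≤ ω / 2 * (T (k+1) + T k) * (T (k+1) - T k) := by
            have hmul : (‖X (k+1) - x0‖ + ‖X k - x0‖) * ‖X (k+1) - X k‖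
                ≤ (T (k+1) + T k) * (T (k+1) - T k) :=
              mul_le_mul (add_le_add hXk1 hXk) ih.2 (norm_nonneg _)
                (by linarith [(Tnn_le k).1, (Tnn_le (k+1)).1])
            rw [mul_assoc, mul_assoc]
            exact mul_le_mul_of_nonneg_left hmul (by positivity)
        _ = T (k+1+1) - T (k+1) := by rw [Tsucc (k+1), Tsucc k]; ring
  have hXball : ∀ k, X k ∈ Metric.closedBall x0 ρm := by
    intro k
    simp only [Metric.mem_closedBall, dist_eq_norm]
    exact le_trans (main k).1 (Tnn_le k).2
  have hXD : ∀ k, X k ∈ D := fun k => hball (hXball k)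
  have chain : ∀ k m, k ≤ m → ‖X m - X k‖ ≤ T m - T k := by
    intro k m hkm
    induction m with
    | zero =>
      have : k = 0 := Nat.le_zero.mp hkm
      subst this; simp
    | succ m ihm =>
      rcases Nat.lt_or_ge k (m+1) with hlt | hge
      · have hkm' : k ≤ m := Nat.lt_succ_iff.mp hlt
        calc ‖X (m+1) - X k‖ = ‖(X (m+1) - X m) + (X m - X k)‖ := by abel_nf
          _ ≤ ‖X (m+1) - X m‖ + ‖X m - X k‖ := norm_add_le _ _
          _ ≤ (T (m+1) - T m) + (T m - T k) := add_le_add (main m).2 (ihm hkm')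
          _ = T (m+1) - T k := by ring
      · have : k = m + 1 := le_antisymm hkm hge
        subst this; simp
  -- T tends to ρm
  have hTlim : Filter.Tendsto T Filter.atTop (nhds ρm) := by
    rcases tendsto_of_monotone Tmono with htop | ⟨L, hL⟩
    · exfalso
      obtain ⟨k, hk⟩ := (Filter.tendsto_atTop.mp htop (ρm + 1)).exists
      linarith [(Tnn_le k).2]
    · have hLle : L ≤ ρm := le_of_tendsto hL (Filter.Eventually.of_forall fun k => (Tnn_le k).2)
      have h1 : Filter.Tendsto (fun k => T (k + 1)) Filter.atTop (nhds L) :=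
        hL.comp (Filter.tendsto_add_atTop_nat 1)
      have h2 : Filter.Tendsto (fun k => η + ω / 2 * T k ^ 2) Filter.atTop
          (nhds (η + ω / 2 * L ^ 2)) :=
        Filter.Tendsto.const_add _ (Filter.Tendsto.const_mul _ (hL.pow 2))
      have h3 : (fun k => T (k + 1)) = fun k => η + ω / 2 * T k ^ 2 := funext Tsucc
      rw [h3] at h1
      have hEq : L = η + ω / 2 * L ^ 2 := tendsto_nhds_unique h1 h2
      have hfac : (ρm - L) * (ρp - L) = 0 := by
        have hω' : ω ≠ 0 := ne_of_gt hω
        have h3 : ω / 2 * ((ρm - L) * (ρp - L)) = 0 := by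
          linear_combination idprod - L * idsum - hEq
        rcases mul_eq_zero.mp h3 with h | h
        · exfalso; linarith
        · exact h
      have hLρm : L = ρm := by
        rcases mul_eq_zero.mp hfac with h | h
        · linarith
        · linarith
      rwa [hLρm] at hL
  -- X is Cauchy, converges to xs
  have hcauchy : CauchySeq X := by
    apply cauchySeq_of_le_tendsto_0 (fun N => ρm - T N)
    · intro m m' N hm hm'
      have hd : ∀ a b : ℕ, N ≤ a → a ≤ b → dist (X a) (X b) ≤ ρm - T N := by
        intro a b ha hab
        rw [dist_eq_norm, norm_sub_rev]
        calc ‖X b - X a‖ ≤ T b - T a := chain a b hab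
          _ ≤ ρm - T N := by linarith [(Tnn_le b).2, Tmono ha]
      rcases le_total m m' with hle | hle
      · exact hd m m' hm hle
      · rw [dist_comm]; exact hd m' m hm' hle
    · have h4 : Filter.Tendsto (fun N => ρm - T N) Filter.atTop (nhds (ρm - ρm)) :=
        tendsto_const_nhds.sub hTlim
      simpa using h4
  obtain ⟨xs, hxs⟩ := cauchySeq_tendsto_of_complete hcauchy
  have hxsball : xs ∈ Metric.closedBall x0 ρm :=
    Metric.isClosed_closedBall.mem_of_tendsto hxs (Filter.Eventually.of_forall hXball)
  have hxsD : xs ∈ D := hball hxsball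
  have hXxs : ∀ k, ‖X k - xs‖ ≤ ρm - T k := by
    intro k
    have h1 : Filter.Tendsto (fun m => ‖X m - X k‖) Filter.atTop (nhds ‖xs - X k‖) :=
      (hxs.sub tendsto_const_nhds).norm
    have h2 : ‖xs - X k‖ ≤ ρm - T k := by
      refine le_of_tendsto h1 (Filter.eventually_atTop.2 ⟨k, fun m hm => ?_⟩)
      calc ‖X m - X k‖ ≤ T m - T k := chain k m hm
        _ ≤ ρm - T k := by linarith [(Tnn_le m).2]
    rwa [norm_sub_rev]
  have hgxs : g xs = xs := by
    have h1 : Filter.Tendsto (fun k => X (k + 1)) Filter.atTop (nhds xs) :=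
      hxs.comp (Filter.tendsto_add_atTop_nat 1)
    have h2 : Filter.Tendsto (fun k => g (X k)) Filter.atTop (nhds (g xs)) :=
      ((hgderiv xs hxsD).continuousAt.tendsto).comp hxs
    have h3 : (fun k => X (k + 1)) = fun k => g (X k) := funext Xsucc
    rw [h3] at h1
    exact (tendsto_nhds_unique h2 h1)
  have hfxs : f xs = 0 := by
    have hA0 : A (f xs) = 0 := by
      have h1 := hgxs
      rw [hg] at h1
      simpa [sub_eq_self] using h1
    have h2 : (f' x0 ∘L A) (f xs) = f xs := by rw [hA2]; rfl
    rw [ContinuousLinearMap.comp_apply, hA0, map_zero] at h2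
    exact h2.symm
  refine ⟨xs, hxsball, hfxs, ?_⟩
  -- uniqueness
  intro y hy hfy
  have hyD : y ∈ D := hy.2
  have hgy : g y = y := by rw [hg]; simp [hfy]
  have hxsn : ‖xs - x0‖ ≤ ρm := by
    have := Metric.mem_closedBall.mp hxsball
    rwa [dist_eq_norm] at this
  have urule : ∀ w, f w = 0 → w ∈ D → ‖w - x0‖ < ρp → w = xs := by
    intro w hfw hwD hwlt
    have hgw : g w = w := by rw [hg]; simp [hfw]
    have hk := key w hwD xs hxsD
    rw [hgw, hgxs] at hk
    have hq : ω / 2 * (‖w - x0‖ + ‖xs - x0‖) < 1 := by nlinarith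
    have h0 : ‖w - xs‖ ≤ 0 := by nlinarith [norm_nonneg (w - xs)]
    have h1 : ‖w - xs‖ = 0 := le_antisymm h0 (norm_nonneg _)
    exact sub_eq_zero.mp (norm_eq_zero.mp h1)
  rcases hy.1 with hyc | hyb
  · -- y in the closed ball of radius ρm
    have hyn : ‖y - x0‖ ≤ ρm := by
      have := Metric.mem_closedBall.mp hyc
      rwa [dist_eq_norm] at this
    rcases lt_or_ge ρm ρp with hcase | hcase
    · exact urule y hfy hyD (lt_of_le_of_lt hyn hcase)
    · have hpm : ρp = ρm := le_antisymm hcase hρmp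
      have hynp : ‖y - x0‖ ≤ ρp := hpm ▸ hyn
      have hind : ∀ k, ‖y - X k‖ ≤ ρp - T k := by
        intro k
        induction k with
        | zero => rw [X0, T0, sub_zero]; exact hynp
        | succ k ih =>
          have hk := key y hyD (X k) (hXD k)
          rw [hgy] at hk
          have hTk1 := (Tnn_le k).1
          have hTk2 := (Tnn_le k).2
          have hXkb : ‖X k - x0‖ ≤ T k := (main k).1
          have hρpT : 0 ≤ ρp - T k := by rw [hpm]; linarith
          rw [Xsucc, Tsucc]
          calc ‖y - g (X k)‖
              ≤ ω / 2 * (‖y - x0‖ + ‖X k - x0‖) * ‖y - X k‖ := hk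
            _ ≤ ω / 2 * (ρp + T k) * (ρp - T k) := by
                have hmul : (‖y - x0‖ + ‖X k - x0‖) * ‖y - X k‖
                    ≤ (ρp + T k) * (ρp - T k) :=
                  mul_le_mul (add_le_add hynp hXkb) ih (norm_nonneg _) (by linarith)
                rw [mul_assoc, mul_assoc]
                exact mul_le_mul_of_nonneg_left hmul (by positivity)
            _ = ρp - (η + ω / 2 * T k ^ 2) := by linear_combination idp
      have hfin : ∀ k, ‖y - xs‖ ≤ (ρp - T k) + (ρm - T k) := by
        intro k
        have : y - xs = (y - X k) + (X k - xs) := by abel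
        rw [this]
        exact le_trans (norm_add_le _ _) (add_le_add (hind k) (hXxs k))
      have hlim : Filter.Tendsto (fun k => (ρp - T k) + (ρm - T k)) Filter.atTop
          (nhds ((ρp - ρm) + (ρm - ρm))) :=
        (tendsto_const_nhds.sub hTlim).add (tendsto_const_nhds.sub hTlim)
      have h0 : ‖y - xs‖ ≤ (ρp - ρm) + (ρm - ρm) :=
        ge_of_tendsto hlim (Filter.Eventually.of_forall hfin)
      have h1 : ‖y - xs‖ = 0 := le_antisymm (by rw [hpm] at h0; linarith) (norm_nonneg _)
      exact sub_eq_zero.mp (norm_eq_zero.mp h1)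
  · -- y in the open ball of radius ρp
    have hyn : ‖y - x0‖ < ρp := by
      have := Metric.mem_ball.mp hyb
      rwa [dist_eq_norm] at this
    exact urule y hfy hyD hyn
end

section
/- (Kantorovich, convergence part) Under the hypotheses of Kantorovich's theorem with h = ηω ≤ 1/2 and B̄(x⁰, ρ₋) ⊆ D, the Newton iterates x^{k+1} = x^k − f'(x^k)⁻¹ f(x^k) starting at x⁰ are well-defined, remain in B̄(x⁰, ρ₋), and converge to the zero x*; moreover ‖x* − x^k‖ ≤ (η/h) · (1 − √(1 − 2h))^{2^k} / 2^k for all k ≥ 0. -/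
open Set

/-- Norm bound for the vector image under a right inverse. -/
lemma kant_inv_bound {E : Type*} [NormedAddCommGroup E] [NormedSpace ℝ E]
    (a b : E →L[ℝ] E) (hab : a ∘L b = ContinuousLinearMap.id ℝ E)
    {c : ℝ} (hc : ‖ContinuousLinearMap.id ℝ E - a‖ ≤ c) (hc1 : c < 1) (w : E) :
    ‖b w‖ ≤ ‖w‖ / (1 - c) := by
  have h1 : a (b w) = w := by
    rw [← ContinuousLinearMap.comp_apply, hab]; rfl
  have h2 : b w - w = (ContinuousLinearMap.id ℝ E - a) (b w) := by
    simp [ContinuousLinearMap.sub_apply, h1]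
  have h3 : ‖b w - w‖ ≤ c * ‖b w‖ := by
    rw [h2]
    calc ‖(ContinuousLinearMap.id ℝ E - a) (b w)‖
        ≤ ‖ContinuousLinearMap.id ℝ E - a‖ * ‖b w‖ := ContinuousLinearMap.le_opNorm _ _
      _ ≤ c * ‖b w‖ := mul_le_mul_of_nonneg_right hc (norm_nonneg _)
  have h4 : ‖b w‖ - ‖w‖ ≤ ‖b w - w‖ := norm_sub_norm_le _ _
  rw [le_div_iff₀ (by linarith)]
  nlinarith [norm_nonneg (b w)]

/-- Quadratic Taylor remainder bound. -/
lemma kant_taylor_s7 {E : Type*} [NormedAddCommGroup E] [NormedSpace ℝ E]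
    (F : E → E) (F' : E → (E →L[ℝ] E)) (ω : ℝ) (hω : 0 ≤ ω) (x y : E)
    (hd : ∀ t ∈ Icc (0:ℝ) 1, HasFDerivAt F (F' (x + t • (y - x))) (x + t • (y - x)))
    (hl : ∀ t ∈ Icc (0:ℝ) 1, ‖F' (x + t • (y - x)) - F' x‖ ≤ ω * (t * ‖y - x‖)) :
    ‖F y - F x - F' x (y - x)‖ ≤ ω / 2 * ‖y - x‖ ^ 2 := by
  set g : ℝ → E := fun t => F (x + t • (y - x)) - F x - t • (F' x (y - x)) with hg
  have hgd : ∀ t ∈ Icc (0:ℝ) 1,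
      HasDerivAt g ((F' (x + t • (y - x)) - F' x) (y - x)) t := by
    intro t ht
    have h1 : HasDerivAt (fun t : ℝ => x + t • (y - x)) (y - x) t := by
      simpa using ((hasDerivAt_id t).smul_const (y - x)).const_add x
    have h2 := (hd t ht).comp_hasDerivAt t h1
    have h3 : HasDerivAt (fun t : ℝ => t • (F' x (y - x))) (F' x (y - x)) t := by
      simpa using (hasDerivAt_id t).smul_const (F' x (y - x))
    rw [ContinuousLinearMap.sub_apply]
    exact (h2.sub_const (F x)).sub h3
  have key : ∀ u ∈ Icc (0:ℝ) 1, ‖g u‖ ≤ ω / 2 * ‖y - x‖ ^ 2 * u ^ 2 := by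
    refine image_norm_le_of_norm_deriv_right_le_deriv_boundary
      (f := g) (f' := fun t => (F' (x + t • (y - x)) - F' x) (y - x))
      (B := fun t => ω / 2 * ‖y - x‖ ^ 2 * t ^ 2)
      (B' := fun t => ω * ‖y - x‖ ^ 2 * t) ?_ ?_ ?_ ?_ ?_
    · exact fun t ht => (hgd t ht).continuousAt.continuousWithinAt
    · exact fun t ht => ((hgd t (Ico_subset_Icc_self ht)).hasDerivWithinAt)
    · simp [hg]
    · intro t
      have := ((hasDerivAt_pow 2 t).const_mul (ω / 2 * ‖y - x‖ ^ 2))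
      refine this.congr_deriv ?_
      push_cast; ring
    · intro t ht
      have ht' : t ∈ Icc (0:ℝ) 1 := Ico_subset_Icc_self ht
      calc ‖(F' (x + t • (y - x)) - F' x) (y - x)‖
          ≤ ‖F' (x + t • (y - x)) - F' x‖ * ‖y - x‖ := ContinuousLinearMap.le_opNorm _ _
        _ ≤ ω * (t * ‖y - x‖) * ‖y - x‖ := by gcongr; exact hl t ht'
        _ = ω * ‖y - x‖ ^ 2 * t := by ring
  have := key 1 (by norm_num)
  simpa [hg] using this

noncomputable def kantE (ω s ρ : ℝ) : ℕ → ℝ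
  | 0 => ρ
  | k + 1 => (kantE ω s ρ k) ^ 2 / (2 * (kantE ω s ρ k + s / ω))

section kantE
variable {ω s ρ : ℝ}

lemma kantE_succ (k : ℕ) :
    kantE ω s ρ (k + 1) = (kantE ω s ρ k) ^ 2 / (2 * (kantE ω s ρ k + s / ω)) := rfl

lemma kantE_pos (hω : 0 < ω) (hs : 0 ≤ s) (hρ : 0 < ρ) : ∀ k, 0 < kantE ω s ρ k := by
  intro k
  induction k with
  | zero => exact hρ
  | succ k ih =>
    rw [kantE_succ]
    have hσ : 0 ≤ s / ω := div_nonneg hs hω.le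
    positivity

lemma kantE_half (hω : 0 < ω) (hs : 0 ≤ s) (hρ : 0 < ρ) (k : ℕ) :
    kantE ω s ρ (k + 1) ≤ kantE ω s ρ k / 2 := by
  have he := kantE_pos hω hs hρ k
  have hσ : 0 ≤ s / ω := div_nonneg hs hω.le
  rw [kantE_succ, div_le_div_iff₀ (by positivity) (by norm_num)]
  nlinarith

lemma kantE_le (hω : 0 < ω) (hs : 0 ≤ s) (hρ : 0 < ρ) (k : ℕ) :
    kantE ω s ρ k ≤ ρ * (1 / 2) ^ k := by
  induction k with
  | zero => simp [kantE]
  | succ k ih =>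
    calc kantE ω s ρ (k + 1) ≤ kantE ω s ρ k / 2 := kantE_half hω hs hρ k
      _ ≤ ρ * (1 / 2) ^ k / 2 := by linarith
      _ = ρ * (1 / 2) ^ (k + 1) := by ring

lemma kantE_antitone (hω : 0 < ω) (hs : 0 ≤ s) (hρ : 0 < ρ) {j k : ℕ} (hjk : j ≤ k) :
    kantE ω s ρ k ≤ kantE ω s ρ j := by
  induction k with
  | zero => simp_all
  | succ k ih =>
    rcases Nat.lt_or_ge j (k+1) with hlt | hge
    · have := kantE_half hω hs hρ k
      have := kantE_pos hω hs hρ k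
      have := ih (Nat.lt_succ_iff.mp hlt)
      linarith
    · have : j = k + 1 := le_antisymm hjk hge
      simp [this]

/-- Step identity: the Newton decrement of the majorant. -/
lemma kantE_step_eq (hω : 0 < ω) (hs : 0 ≤ s) (hρ : 0 < ρ) (k : ℕ) :
    (ω / 2 * kantE ω s ρ k * (kantE ω s ρ k + 2 * (s / ω))) / (ω * kantE ω s ρ k + s)
      = kantE ω s ρ k - kantE ω s ρ (k + 1) := by
  have he := kantE_pos hω hs hρ k
  rw [kantE_succ]
  have h1 : ω * kantE ω s ρ k + s > 0 := by positivity
  have h2 : 2 * (kantE ω s ρ k + s / ω) > 0 := by positivity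
  field_simp
  ring

/-- Quadratic identity for the remainder. -/
lemma kantE_quad (hω : 0 < ω) (hs : 0 ≤ s) (hρ : 0 < ρ) (k : ℕ) :
    ω / 2 * (kantE ω s ρ k - kantE ω s ρ (k + 1)) ^ 2
      = ω / 2 * kantE ω s ρ (k + 1) * (kantE ω s ρ (k + 1) + 2 * (s / ω)) := by
  have he := kantE_pos hω hs hρ k
  rw [kantE_succ]
  have h2 : 2 * (kantE ω s ρ k + s / ω) > 0 := by positivity
  field_simp
  ring

/-- The a priori error bound for the majorant sequence, with `ρ = (1-s)/ω`. -/
lemma kantE_bound (hω : 0 < ω) (hs : 0 ≤ s) (hs1 : s < 1) :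
    ∀ k, kantE ω s ((1 - s)/ω) k ≤ (1 - s) ^ (2 ^ k) / (ω * 2 ^ k) := by
  have hρ : 0 < (1 - s)/ω := by have : 0 < 1 - s := by linarith
                                positivity
  intro k
  induction k with
  | zero => simp [kantE]
  | succ k ih =>
    set β : ℝ := (1 - s) ^ (2 ^ k) / (ω * 2 ^ k) with hβ
    have hT : (0:ℝ) < (1 - s) ^ (2 ^ k) := pow_pos (by linarith) _
    have hc : (0:ℝ) < (2:ℝ) ^ k := by positivity
    have hβpos : 0 < β := by rw [hβ]; positivity
    have he := kantE_pos hω hs hρ k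
    have hσ : 0 ≤ s / ω := div_nonneg hs hω.le
    -- monotonicity of u ↦ u²/(2(u+σ))
    have mono : kantE ω s ((1 - s)/ω) (k+1) ≤ β ^ 2 / (2 * (β + s / ω)) := by
      rw [kantE_succ, div_le_div_iff₀ (by positivity) (by positivity)]
      have f1 := mul_le_mul_of_nonneg_right
        (mul_self_le_mul_self he.le ih) hσ
      have f2 := mul_le_mul_of_nonneg_right ih
        (mul_nonneg he.le hβpos.le)
      nlinarith [f1, f2]
    -- Bernoulli: (1-s)^(2^k) ≥ 1 - 2^k s
    have bern : 1 - (2:ℝ) ^ k * s ≤ (1 - s) ^ (2 ^ k) := by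
      have := one_add_mul_le_pow (a := -s) (by linarith) (2 ^ k)
      push_cast at this ⊢
      calc 1 - (2:ℝ) ^ k * s = 1 + (2:ℕ) ^ k * (-s) := by push_cast; ring
        _ ≤ (1 + -s) ^ (2 ^ k : ℕ) := this
        _ = (1 - s) ^ (2 ^ k : ℕ) := by ring_nf
    -- key: β + s/ω ≥ 1/(ω 2^k)
    have key : 1 / (ω * 2 ^ k) ≤ β + s / ω := by
      have h1 : β + s / ω = ((1 - s) ^ (2 ^ k) + s * 2 ^ k) / (ω * 2 ^ k) := by
        rw [hβ]; field_simp
      rw [h1]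
      gcongr
      nlinarith [bern]
    have goal2 : β ^ 2 / (2 * (β + s / ω)) ≤ (1 - s) ^ (2 ^ (k+1)) / (ω * 2 ^ (k+1)) := by
      have hrw : (1 - s) ^ (2 ^ (k+1)) / (ω * 2 ^ (k+1)) = β ^ 2 * (ω * 2 ^ k) / 2 := by
        rw [hβ]
        have h1 : (2:ℕ) ^ (k+1) = 2 ^ k * 2 := by ring
        rw [h1, pow_mul]
        field_simp
        ring
      rw [hrw, div_le_div_iff₀ (by positivity) (by norm_num)]
      -- β² * 2 ≤ β² (ω 2^k) 2 (β + σ), i.e. 1 ≤ (ω 2^k)(β + σ)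
      have h2 : 1 ≤ ω * 2 ^ k * (β + s / ω) := by
        have := (div_le_iff₀ (show (0:ℝ) < ω * 2 ^ k by positivity)).mp key
        nlinarith [this]
      nlinarith [mul_le_mul_of_nonneg_left h2 (sq_nonneg β)]
    exact mono.trans goal2

end kantE

/-- Kantorovich's theorem, convergence part: the Newton iterates starting at `x⁰` are
well-defined, remain in `B̄(x⁰,ρ₋)`, converge to a zero `x*`, and satisfy the a priori
error bound `‖x* − x^k‖ ≤ (η/h)(1−√(1−2h))^{2^k}/2^k`. -/
theorem kantorovich_convergence
    (n : ℕ) (D : Set (Fin n → ℝ)) (hDopen : IsOpen D) (hDconv : Convex ℝ D)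
    (f : (Fin n → ℝ) → (Fin n → ℝ))
    (f' : (Fin n → ℝ) → ((Fin n → ℝ) →L[ℝ] (Fin n → ℝ)))
    (hdiff : ∀ x ∈ D, HasFDerivAt f (f' x) x)
    (x0 : Fin n → ℝ) (hx0 : x0 ∈ D)
    (A : (Fin n → ℝ) →L[ℝ] (Fin n → ℝ))
    (hA1 : A ∘L f' x0 = ContinuousLinearMap.id ℝ (Fin n → ℝ))
    (hA2 : f' x0 ∘L A = ContinuousLinearMap.id ℝ (Fin n → ℝ))
    (η ω h : ℝ) (hη : ‖A (f x0)‖ ≤ η) (hω : 0 < ω)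
    (hLip : ∀ x ∈ D, ∀ y ∈ D, ‖A ∘L (f' x - f' y)‖ ≤ ω * ‖x - y‖)
    (hh : h = η * ω) (hpos : 0 < h) (hhalf : h ≤ 1 / 2)
    (ρ : ℝ) (hρ : ρ = (1 - Real.sqrt (1 - 2 * h)) / ω)
    (hball : Metric.closedBall x0 ρ ⊆ D) :
    ∃ (x : ℕ → (Fin n → ℝ)) (xs : Fin n → ℝ),
      x 0 = x0 ∧ f xs = 0 ∧ xs ∈ Metric.closedBall x0 ρ ∧
      (∀ k, x k ∈ Metric.closedBall x0 ρ) ∧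
      (∀ k, ∃ Ak : (Fin n → ℝ) →L[ℝ] (Fin n → ℝ),
        Ak ∘L f' (x k) = ContinuousLinearMap.id ℝ (Fin n → ℝ) ∧
        f' (x k) ∘L Ak = ContinuousLinearMap.id ℝ (Fin n → ℝ) ∧
        x (k + 1) = x k - Ak (f (x k))) ∧
      Filter.Tendsto x Filter.atTop (nhds xs) ∧
      (∀ k : ℕ, ‖xs - x k‖ ≤ (η / h) * ((1 - Real.sqrt (1 - 2 * h)) ^ (2 ^ k) / 2 ^ k)) := by
  set s : ℝ := Real.sqrt (1 - 2 * h) with hs_def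
  have hs0 : 0 ≤ s := Real.sqrt_nonneg _
  have h2h : 0 ≤ 1 - 2 * h := by linarith
  have hs2 : s ^ 2 = 1 - 2 * h := Real.sq_sqrt h2h
  have hs1 : s < 1 := by nlinarith
  have hρpos : 0 < ρ := by
    rw [hρ]
    have : 0 < 1 - s := by linarith
    positivity
  have hωρ : ω * ρ = 1 - s := by rw [hρ]; field_simp
  have hηpos : 0 < η := by nlinarith
  set e : ℕ → ℝ := kantE ω s ρ with he_def
  have hepos : ∀ k, 0 < e k := kantE_pos hω hs0 hρpos
  have hids : (1 : (Fin n → ℝ) →L[ℝ] (Fin n → ℝ)) = ContinuousLinearMap.id ℝ (Fin n → ℝ) := ContinuousLinearMap.one_def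
  -- Newton map and iterates
  set newt : (Fin n → ℝ) → (Fin n → ℝ) := fun z => z - Ring.inverse (A ∘L f' z) (A (f z)) with hnewt
  set x : ℕ → (Fin n → ℝ) := fun k => newt^[k] x0 with hx_def
  have hx0' : x 0 = x0 := rfl
  have hx1 : ∀ k, x (k + 1) = newt (x k) := fun k => Function.iterate_succ_apply' newt k x0
  -- main step
  have step : ∀ k, (‖x k - x0‖ ≤ ρ - e k ∧ ‖A (f (x k))‖ ≤ ω / 2 * e k * (e k + 2 * (s / ω))) →
      ((∃ Ak : (Fin n → ℝ) →L[ℝ] (Fin n → ℝ),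
        Ak ∘L f' (x k) = ContinuousLinearMap.id ℝ (Fin n → ℝ) ∧
        f' (x k) ∘L Ak = ContinuousLinearMap.id ℝ (Fin n → ℝ) ∧
        x (k + 1) = x k - Ak (f (x k))) ∧
      ‖x (k + 1) - x k‖ ≤ e k - e (k + 1) ∧
      (‖x (k + 1) - x0‖ ≤ ρ - e (k + 1) ∧
        ‖A (f (x (k + 1)))‖ ≤ ω / 2 * e (k + 1) * (e (k + 1) + 2 * (s / ω)))) := by
    rintro k ⟨hP1, hP2⟩
    have hρe : 0 ≤ ρ - e k := le_trans (norm_nonneg _) hP1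
    have hxkball : x k ∈ Metric.closedBall x0 ρ := by
      rw [Metric.mem_closedBall, dist_eq_norm]
      have := hepos k
      linarith
    have hxkD : x k ∈ D := hball hxkball
    set a : (Fin n → ℝ) →L[ℝ] (Fin n → ℝ) := A ∘L f' (x k) with ha_def
    have hT : ‖ContinuousLinearMap.id ℝ (Fin n → ℝ) - a‖ ≤ ω * (ρ - e k) := by
      have h1 : ContinuousLinearMap.id ℝ (Fin n → ℝ) - a = A ∘L (f' x0 - f' (x k)) := by
        rw [ContinuousLinearMap.comp_sub, hA1]
      rw [h1]
      calc ‖A ∘L (f' x0 - f' (x k))‖ ≤ ω * ‖x0 - x k‖ := hLip x0 hx0 (x k) hxkD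
        _ = ω * ‖x k - x0‖ := by rw [norm_sub_rev]
        _ ≤ ω * (ρ - e k) := mul_le_mul_of_nonneg_left hP1 hω.le
    have hc1 : ω * (ρ - e k) < 1 := by nlinarith [hepos k]
    have haunit : IsUnit a := by
      have h01 : ‖(1 : (Fin n → ℝ) →L[ℝ] (Fin n → ℝ)) - a‖ < 1 := by
        rw [hids]; exact lt_of_le_of_lt hT hc1
      have := isUnit_one_sub_of_norm_lt_one (x := (1 : (Fin n → ℝ) →L[ℝ] (Fin n → ℝ)) - a) h01
      rwa [sub_sub_cancel] at this
    set b : (Fin n → ℝ) →L[ℝ] (Fin n → ℝ) := Ring.inverse a with hb_def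
    have hba : b ∘L a = ContinuousLinearMap.id ℝ (Fin n → ℝ) := by
      rw [← ContinuousLinearMap.mul_def, ← hids]
      exact Ring.inverse_mul_cancel a haunit
    have habc : a ∘L b = ContinuousLinearMap.id ℝ (Fin n → ℝ) := by
      rw [← ContinuousLinearMap.mul_def, ← hids]
      exact Ring.mul_inverse_cancel a haunit
    have hbw : ∀ w : Fin n → ℝ, ‖b w‖ ≤ ‖w‖ / (1 - ω * (ρ - e k)) :=
      fun w => kant_inv_bound a b habc hT hc1 w
    have hden : 1 - ω * (ρ - e k) = ω * e k + s := by
      have : ω * (ρ - e k) = ω * ρ - ω * e k := by ring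
      rw [this, hωρ]
      try ring
    have hdenpos : 0 < ω * e k + s := by have := hepos k; positivity
    have hstepxy : x (k + 1) - x k = -(b (A (f (x k)))) := by
      have hun : newt (x k) = x k - b (A (f (x k))) := rfl
      rw [hx1 k, hun]
      abel
    have hΔ : ‖x (k + 1) - x k‖ ≤ e k - e (k + 1) := by
      rw [hstepxy, norm_neg]
      calc ‖b (A (f (x k)))‖ ≤ ‖A (f (x k))‖ / (1 - ω * (ρ - e k)) := hbw _
        _ = ‖A (f (x k))‖ / (ω * e k + s) := by rw [hden]
        _ ≤ (ω / 2 * e k * (e k + 2 * (s / ω))) / (ω * e k + s) := by gcongr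
        _ = e k - e (k + 1) := kantE_step_eq hω hs0 hρpos k
    have hΔpos : 0 ≤ e k - e (k + 1) := le_trans (norm_nonneg _) hΔ
    have hP1' : ‖x (k + 1) - x0‖ ≤ ρ - e (k + 1) := by
      calc ‖x (k + 1) - x0‖ = ‖(x (k + 1) - x k) + (x k - x0)‖ := by rw [sub_add_sub_cancel]
        _ ≤ ‖x (k + 1) - x k‖ + ‖x k - x0‖ := norm_add_le _ _
        _ ≤ (e k - e (k + 1)) + (ρ - e k) := add_le_add hΔ hP1
        _ = ρ - e (k + 1) := by ring
    have hx1ball : x (k + 1) ∈ Metric.closedBall x0 ρ := by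
      rw [Metric.mem_closedBall, dist_eq_norm]
      have := hepos (k + 1)
      linarith
    -- Taylor estimate
    have htay : ‖A (f (x (k + 1))) - A (f (x k)) - (A ∘L f' (x k)) (x (k + 1) - x k)‖
        ≤ ω / 2 * ‖x (k + 1) - x k‖ ^ 2 := by
      have hmem : ∀ t ∈ Icc (0:ℝ) 1,
          x k + t • (x (k + 1) - x k) ∈ Metric.closedBall x0 ρ := fun t ht =>
        (convex_closedBall x0 ρ).add_smul_sub_mem hxkball hx1ball ht
      have hd : ∀ t ∈ Icc (0:ℝ) 1,
          HasFDerivAt (fun z => A (f z)) (A ∘L f' (x k + t • (x (k + 1) - x k)))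
            (x k + t • (x (k + 1) - x k)) := fun t ht =>
        A.hasFDerivAt.comp _ (hdiff _ (hball (hmem t ht)))
      have hl : ∀ t ∈ Icc (0:ℝ) 1,
          ‖(A ∘L f' (x k + t • (x (k + 1) - x k))) - A ∘L f' (x k)‖
            ≤ ω * (t * ‖x (k + 1) - x k‖) := by
        intro t ht
        rw [← ContinuousLinearMap.comp_sub]
        calc ‖A ∘L (f' (x k + t • (x (k + 1) - x k)) - f' (x k))‖
            ≤ ω * ‖(x k + t • (x (k + 1) - x k)) - x k‖ :=
              hLip _ (hball (hmem t ht)) (x k) hxkD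
          _ = ω * (t * ‖x (k + 1) - x k‖) := by
              rw [add_sub_cancel_left, norm_smul, Real.norm_of_nonneg ht.1]
      exact kant_taylor_s7 (fun z => A (f z)) (fun z => A ∘L f' z) ω hω.le
        (x k) (x (k + 1)) hd hl
    have hcancel : A (f (x k)) + (A ∘L f' (x k)) (x (k + 1) - x k) = 0 := by
      rw [hstepxy, map_neg]
      have h1 : a (b (A (f (x k)))) = A (f (x k)) := by
        rw [← ContinuousLinearMap.comp_apply, habc, ContinuousLinearMap.id_apply]
      rw [← ha_def, h1]
      abel
    have hP2' : ‖A (f (x (k + 1)))‖ ≤ ω / 2 * e (k + 1) * (e (k + 1) + 2 * (s / ω)) := by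
      have h1 : A (f (x (k + 1))) =
          (A (f (x (k + 1))) - A (f (x k)) - (A ∘L f' (x k)) (x (k + 1) - x k)) +
            (A (f (x k)) + (A ∘L f' (x k)) (x (k + 1) - x k)) := by abel
      rw [h1, hcancel, add_zero]
      calc ‖A (f (x (k + 1))) - A (f (x k)) - (A ∘L f' (x k)) (x (k + 1) - x k)‖
          ≤ ω / 2 * ‖x (k + 1) - x k‖ ^ 2 := htay
        _ ≤ ω / 2 * (e k - e (k + 1)) ^ 2 := by gcongr
        _ = ω / 2 * e (k + 1) * (e (k + 1) + 2 * (s / ω)) := kantE_quad hω hs0 hρpos k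
    refine ⟨⟨b ∘L A, ?_, ?_, ?_⟩, hΔ, hP1', hP2'⟩
    · rw [ContinuousLinearMap.comp_assoc, ← ha_def]
      exact hba
    · have habc' : A ∘L (f' (x k) ∘L b) = ContinuousLinearMap.id ℝ (Fin n → ℝ) := by
        rw [ha_def] at habc
        rw [← ContinuousLinearMap.comp_assoc]
        exact habc
      have h1 : f' (x k) ∘L b = f' x0 := by
        calc f' (x k) ∘L b
            = (f' x0 ∘L A) ∘L (f' (x k) ∘L b) := by
              rw [hA2, ContinuousLinearMap.id_comp]
          _ = f' x0 ∘L (A ∘L (f' (x k) ∘L b)) := ContinuousLinearMap.comp_assoc _ _ _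
          _ = f' x0 := by rw [habc', ContinuousLinearMap.comp_id]
      rw [← ContinuousLinearMap.comp_assoc, h1, hA2]
    · rw [hx1 k]
      rfl
  -- base case and invariant
  have base : ‖x 0 - x0‖ ≤ ρ - e 0 ∧ ‖A (f (x 0))‖ ≤ ω / 2 * e 0 * (e 0 + 2 * (s / ω)) := by
    constructor
    · show ‖x0 - x0‖ ≤ ρ - kantE ω s ρ 0
      simp [kantE]
    · show ‖A (f x0)‖ ≤ ω / 2 * kantE ω s ρ 0 * (kantE ω s ρ 0 + 2 * (s / ω))
      have heq : ω / 2 * kantE ω s ρ 0 * (kantE ω s ρ 0 + 2 * (s / ω)) = η := by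
        show ω / 2 * ρ * (ρ + 2 * (s / ω)) = η
        rw [hρ]
        field_simp
        nlinarith [hs2, hh]
      rw [heq]; exact hη
  have inv : ∀ k, ‖x k - x0‖ ≤ ρ - e k ∧
      ‖A (f (x k))‖ ≤ ω / 2 * e k * (e k + 2 * (s / ω)) := by
    intro k
    induction k with
    | zero => exact base
    | succ k ih => exact (step k ih).2.2
  have hstepAll : ∀ k, ‖x (k + 1) - x k‖ ≤ e k - e (k + 1) := fun k => (step k (inv k)).2.1
  have hballAll : ∀ k, x k ∈ Metric.closedBall x0 ρ := by
    intro k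
    rw [Metric.mem_closedBall, dist_eq_norm]
    have := hepos k
    have := (inv k).1
    linarith
  -- Cauchy and limit
  have hele := kantE_le hω hs0 hρpos
  have hcauchy : CauchySeq x := by
    apply cauchySeq_of_le_geometric (1/2) ρ (by norm_num)
    intro m
    rw [dist_eq_norm, norm_sub_rev]
    calc ‖x (m + 1) - x m‖ ≤ e m - e (m + 1) := hstepAll m
      _ ≤ e m := by linarith [hepos (m + 1)]
      _ ≤ ρ * (1/2) ^ m := hele m
  obtain ⟨xs, hxs⟩ := cauchySeq_tendsto_of_complete hcauchy
  have htel : ∀ k m, ‖x (k + m) - x k‖ ≤ e k - e (k + m) := by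
    intro k m
    induction m with
    | zero => simp
    | succ m ih =>
      rw [show k + (m + 1) = (k + m) + 1 from rfl]
      calc ‖x ((k + m) + 1) - x k‖
          = ‖(x ((k + m) + 1) - x (k + m)) + (x (k + m) - x k)‖ := by
            rw [sub_add_sub_cancel]
      _ ≤ ‖x ((k + m) + 1) - x (k + m)‖ + ‖x (k + m) - x k‖ := norm_add_le _ _
      _ ≤ (e (k + m) - e ((k + m) + 1)) + (e k - e (k + m)) :=
            add_le_add (hstepAll (k + m)) ih
      _ = e k - e ((k + m) + 1) := by ring
  have hlim : ∀ k, ‖xs - x k‖ ≤ e k := by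
    intro k
    have h1 : Filter.Tendsto (fun m => ‖x (m + k) - x k‖) Filter.atTop (nhds ‖xs - x k‖) := by
      have h2 : Filter.Tendsto (fun m => x (m + k)) Filter.atTop (nhds xs) :=
        hxs.comp (Filter.tendsto_add_atTop_nat k)
      exact ((h2.sub tendsto_const_nhds).norm)
    refine le_of_tendsto h1 (Filter.Eventually.of_forall fun m => ?_)
    have h4 := htel k m
    rw [Nat.add_comm k m] at h4
    linarith [hepos (m + k)]
  have hxsball : xs ∈ Metric.closedBall x0 ρ :=
    (Metric.isClosed_closedBall).mem_of_tendsto hxs (Filter.Eventually.of_forall hballAll)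
  -- f xs = 0
  have he0 : Filter.Tendsto e Filter.atTop (nhds 0) := by
    apply squeeze_zero (fun k => (hepos k).le) hele
    have := (tendsto_pow_atTop_nhds_zero_of_lt_one (by norm_num : (0:ℝ) ≤ 1/2)
      (by norm_num : (1:ℝ)/2 < 1)).const_mul ρ
    simpa using this
  have hF0 : Filter.Tendsto (fun k => A (f (x k))) Filter.atTop (nhds 0) := by
    apply squeeze_zero_norm (fun k => (inv k).2)
    have h3 : Filter.Tendsto (fun k => ω / 2 * e k * (e k + 2 * (s / ω))) Filter.atTop
        (nhds (ω / 2 * 0 * (0 + 2 * (s / ω)))) :=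
      ((he0.const_mul (ω / 2)).mul (he0.add tendsto_const_nhds))
    simpa using h3
  have hFlim : Filter.Tendsto (fun k => A (f (x k))) Filter.atTop (nhds (A (f xs))) := by
    have hc : ContinuousAt (fun z => A (f z)) xs :=
      (A.hasFDerivAt.comp xs (hdiff xs (hball hxsball))).continuousAt
    exact (hc.tendsto).comp hxs
  have hAfxs : A (f xs) = 0 := tendsto_nhds_unique hFlim hF0
  have hfxs : f xs = 0 := by
    have h1 : (f' x0 ∘L A) (f xs) = f xs := by rw [hA2]; rfl
    rw [ContinuousLinearMap.comp_apply, hAfxs, map_zero] at h1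
    exact h1.symm
  -- conclusion
  refine ⟨x, xs, hx0', hfxs, hxsball, hballAll, fun k => (step k (inv k)).1, hxs, ?_⟩
  intro k
  have hb := kantE_bound hω hs0 hs1 k
  rw [← hρ] at hb
  have heq : (η / h) * ((1 - s) ^ (2 ^ k) / 2 ^ k) = (1 - s) ^ (2 ^ k) / (ω * 2 ^ k) := by
    rw [hh]
    field_simp
  rw [heq]
  exact le_trans (hlim k) hb
end

section
/- (Termination justification for subdivision near regular zeros) Let f : ℝ² → ℝ² be twice continuously differentiable, and let x* be a zero of f with f'(x*) invertible. Then there exists δ > 0 such that every point x⁰ ∈ B̄(x*, δ) with f'(x⁰) invertible satisfies the Kantorovich condition h = ηω ≤ 1/4 with η = ‖f'(x⁰)⁻¹f(x⁰)‖ and ω any Lipschitz constant of f'(x⁰)⁻¹f' on B̄(x⁰, 2δ); i.e., sufficiently small subdomains containing x* pass the Kantorovich test. -/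
/-- Near a regular zero of a C² map, all sufficiently close starting points pass the
Kantorovich test: there is `δ > 0` such that every `x⁰ ∈ B̄(x*, δ)` with invertible
Jacobian admits a Lipschitz constant `ω` for `f'(x⁰)⁻¹f'` on `B̄(x⁰, 2δ)` with
`h = ηω ≤ 1/4`, where `η = ‖f'(x⁰)⁻¹ f(x⁰)‖`. -/
theorem kantorovich_test_passes_near_regular_zero
    (f : (Fin 2 → ℝ) → (Fin 2 → ℝ)) (hf : ContDiff ℝ 2 f)
    (xs : Fin 2 → ℝ) (hzero : f xs = 0)
    (A : (Fin 2 → ℝ) →L[ℝ] (Fin 2 → ℝ))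
    (hA1 : A ∘L fderiv ℝ f xs = ContinuousLinearMap.id ℝ (Fin 2 → ℝ))
    (hA2 : fderiv ℝ f xs ∘L A = ContinuousLinearMap.id ℝ (Fin 2 → ℝ)) :
    ∃ δ > (0 : ℝ), ∀ x0 ∈ Metric.closedBall xs δ,
      ∀ A0 : (Fin 2 → ℝ) →L[ℝ] (Fin 2 → ℝ),
        A0 ∘L fderiv ℝ f x0 = ContinuousLinearMap.id ℝ (Fin 2 → ℝ) →
        fderiv ℝ f x0 ∘L A0 = ContinuousLinearMap.id ℝ (Fin 2 → ℝ) →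
        ∃ ω > (0 : ℝ),
          (∀ x ∈ Metric.closedBall x0 (2 * δ), ∀ y ∈ Metric.closedBall x0 (2 * δ),
            ‖A0 ∘L (fderiv ℝ f x - fderiv ℝ f y)‖ ≤ ω * ‖x - y‖) ∧
          ‖A0 (f x0)‖ * ω ≤ 1 / 4 := by
  classical
  set g := fderiv ℝ f with hg
  have hf1 : ContDiff ℝ 1 f := hf.of_le one_le_two
  have hfd : Differentiable ℝ f := hf1.differentiable one_ne_zero
  have hg1 : ContDiff ℝ 1 g := hf.fderiv_right (by norm_num)
  have hgd : Differentiable ℝ g := hg1.differentiable one_ne_zero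
  have hgc : Continuous g := hg1.continuous
  -- bounds on the compact ball B̄(xs, 3)
  obtain ⟨L, hL⟩ := (isCompact_closedBall xs 3).exists_bound_of_continuousOn
    ((hg1.fderiv_right (m := 0) (by norm_num)).continuous.continuousOn)
  obtain ⟨C, hC⟩ := (isCompact_closedBall xs 3).exists_bound_of_continuousOn
    hgc.continuousOn
  have hL0 : 0 ≤ L := le_trans (norm_nonneg _) (hL xs (by simp))
  have hC0 : 0 ≤ C := le_trans (norm_nonneg _) (hC xs (by simp))
  -- ‖A‖ > 0
  have hApos : 0 < ‖A‖ := by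
    rcases eq_or_lt_of_le (norm_nonneg A) with h | h
    · exfalso
      have : A = 0 := by
        rwa [eq_comm, norm_eq_zero] at h
      rw [this] at hA1
      simp at hA1
      have := congrArg (fun T : (Fin 2 → ℝ) →L[ℝ] (Fin 2 → ℝ) => ‖T‖) hA1
      simp [ContinuousLinearMap.norm_id] at this
    · exact h
  -- continuity of g at xs: make ‖g x - g xs‖ ≤ 1/(2‖A‖) on a small ball
  have hcont : ∀ᶠ x in nhds xs, ‖g x - g xs‖ < 1 / (2 * ‖A‖) := by
    have : Continuous fun x => ‖g x - g xs‖ := (hgc.sub continuous_const).norm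
    have h0 : (fun x => ‖g x - g xs‖) xs = 0 := by simp
    have := this.continuousAt (x := xs)
    have hpos : (0:ℝ) < 1 / (2 * ‖A‖) := by positivity
    have := this.eventually_lt_const (by rw [h0]; exact hpos)
    exact this
  obtain ⟨δ1, hδ1pos, hδ1⟩ := Metric.eventually_nhds_iff_ball.mp hcont
  -- choose δ
  set M : ℝ := 2 * ‖A‖ with hM
  have hMpos : 0 < M := by positivity
  set ω : ℝ := M * L + 1 with hω
  have hωpos : 0 < ω := by positivity
  set δ : ℝ := min (δ1 / 2) (min 1 (1 / (4 * (M * C + 1) * ω))) with hδ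
  have hδpos : 0 < δ := by
    apply lt_min (by positivity) (lt_min one_pos (by positivity))
  refine ⟨δ, hδpos, ?_⟩
  intro x0 hx0 A0 hA01 hA02
  have hδ1' : δ ≤ δ1 / 2 := min_le_left _ _
  have hδle1 : δ ≤ 1 := le_trans (min_le_right _ _) (min_le_left _ _)
  have hδle : δ ≤ 1 / (4 * (M * C + 1) * ω) := le_trans (min_le_right _ _) (min_le_right _ _)
  have hx0' : dist x0 xs ≤ δ := Metric.mem_closedBall.mp hx0
  -- x0 ∈ ball xs δ1
  have hx0ball : x0 ∈ Metric.ball xs δ1 := by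
    rw [Metric.mem_ball]
    calc dist x0 xs ≤ δ := hx0'
    _ ≤ δ1 / 2 := hδ1'
    _ < δ1 := by linarith
  -- ‖A0‖ ≤ M
  have hA0bound : ‖A0‖ ≤ M := by
    have key : A0 = A + A0 ∘L ((g xs - g x0) ∘L A) := by
      rw [ContinuousLinearMap.sub_comp, ContinuousLinearMap.comp_sub, hA2,
        ← ContinuousLinearMap.comp_assoc, hA01]
      simp
    have hsmall : ‖g xs - g x0‖ ≤ 1 / (2 * ‖A‖) := by
      rw [norm_sub_rev]
      exact le_of_lt (hδ1 x0 hx0ball)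
    have h1 : ‖A0‖ ≤ ‖A‖ + ‖A0‖ * (‖g xs - g x0‖ * ‖A‖) := by
      calc ‖A0‖ = ‖A + A0 ∘L ((g xs - g x0) ∘L A)‖ := by rw [← key]
      _ ≤ ‖A‖ + ‖A0 ∘L ((g xs - g x0) ∘L A)‖ := norm_add_le _ _
      _ ≤ ‖A‖ + ‖A0‖ * ‖(g xs - g x0) ∘L A‖ := by
          gcongr; exact ContinuousLinearMap.opNorm_comp_le _ _
      _ ≤ ‖A‖ + ‖A0‖ * (‖g xs - g x0‖ * ‖A‖) := by
          gcongr; exact ContinuousLinearMap.opNorm_comp_le _ _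
    have h2 : ‖A0‖ * (‖g xs - g x0‖ * ‖A‖) ≤ ‖A0‖ * (1 / 2) := by
      have h3 : ‖g xs - g x0‖ * ‖A‖ ≤ 1 / 2 := by
        rw [le_div_iff₀ (by positivity)] at hsmall
        nlinarith [norm_nonneg (g xs - g x0)]
      exact mul_le_mul_of_nonneg_left h3 (norm_nonneg A0)
    rw [hM]
    linarith
  have hA0nn : (0:ℝ) ≤ ‖A0‖ := norm_nonneg _
  refine ⟨ω, hωpos, ?_, ?_⟩
  · -- Lipschitz bound
    intro x hx y hy
    have hxball : x ∈ Metric.closedBall xs 3 := by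
      rw [Metric.mem_closedBall] at *
      calc dist x xs ≤ dist x x0 + dist x0 xs := dist_triangle _ _ _
      _ ≤ 2 * δ + δ := add_le_add hx hx0'
      _ ≤ 3 := by linarith
    have hyball : y ∈ Metric.closedBall xs 3 := by
      rw [Metric.mem_closedBall] at *
      calc dist y xs ≤ dist y x0 + dist x0 xs := dist_triangle _ _ _
      _ ≤ 2 * δ + δ := add_le_add hy hx0'
      _ ≤ 3 := by linarith
    have hgl : ‖g x - g y‖ ≤ L * ‖x - y‖ :=
      Convex.norm_image_sub_le_of_norm_fderiv_le (fun z _ => hgd z)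
        hL (convex_closedBall xs 3) hyball hxball
    calc ‖A0 ∘L (g x - g y)‖ ≤ ‖A0‖ * ‖g x - g y‖ := ContinuousLinearMap.opNorm_comp_le _ _
    _ ≤ M * (L * ‖x - y‖) := by
        apply mul_le_mul hA0bound hgl (norm_nonneg _) (le_of_lt hMpos)
    _ ≤ ω * ‖x - y‖ := by
        rw [hω]
        have := norm_nonneg (x - y)
        nlinarith
  · -- η ω ≤ 1/4
    have hx0ball3 : x0 ∈ Metric.closedBall xs 3 := by
      rw [Metric.mem_closedBall]
      linarith
    have hfl : ‖f x0 - f xs‖ ≤ C * ‖x0 - xs‖ :=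
      Convex.norm_image_sub_le_of_norm_fderiv_le (fun z _ => hfd z)
        hC (convex_closedBall xs 3) (by simp) hx0ball3
    have hfx0 : ‖f x0‖ ≤ C * δ := by
      rw [hzero, sub_zero] at hfl
      calc ‖f x0‖ ≤ C * ‖x0 - xs‖ := hfl
      _ ≤ C * δ := by
          apply mul_le_mul_of_nonneg_left _ hC0
          rw [← dist_eq_norm]
          exact hx0'
    have hη : ‖A0 (f x0)‖ ≤ M * (C * δ) :=
      calc ‖A0 (f x0)‖ ≤ ‖A0‖ * ‖f x0‖ := A0.le_opNorm _
      _ ≤ M * (C * δ) := mul_le_mul hA0bound hfx0 (norm_nonneg _) (le_of_lt hMpos)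
    have hδω : (M * C + 1) * ω * δ ≤ 1 / 4 := by
      have hne : (4 * (M * C + 1) * ω) ≠ 0 := by positivity
      calc (M * C + 1) * ω * δ ≤ (M * C + 1) * ω * (1 / (4 * (M * C + 1) * ω)) :=
            mul_le_mul_of_nonneg_left hδle (by positivity)
      _ = 1 / 4 := by field_simp
    calc ‖A0 (f x0)‖ * ω ≤ M * (C * δ) * ω := by
          apply mul_le_mul_of_nonneg_right hη (le_of_lt hωpos)
    _ = (M * C) * (ω * δ) := by ring
    _ ≤ (M * C + 1) * (ω * δ) := by
          apply mul_le_mul_of_nonneg_right (by linarith) (by positivity)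
    _ = (M * C + 1) * ω * δ := by ring
    _ ≤ 1 / 4 := hδω
end
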